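/- The number T(r,l) of surjections-with-multiplicity-at-least-2 satisfies T(r,l) = l! Σ_{j=0}^{l} (-1)^j C(r-1, j) S(r-1-j, l-j), where S denotes Stirling numbers of the second kind; here T(r,l) is the number of functions from an (r-1)-element set onto l blocks such that every block has at least two preimages. -/

import Mathlib

open Finset

/-- Stirling numbers of the second kind. -/
def stirling2 : ℕ → ℕ → ℕ
  | 0, 0 => 1
  | 0, _ + 1 => 0
  | _ + 1, 0 => 0
  | n + 1, k + 1 => (k + 1) * stirling2 n (k + 1) + stirling2 n k

def A2 : ℕ → ℕ → ℕ
  | 0, 0 => 1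
  | 0, _ + 1 => 0
  | 1, _ => 0
  | _ + 2, 0 => 0
  | n + 2, l + 1 => (l + 1) * A2 (n + 1) (l + 1) + (n + 1) * A2 n l

def Tcard (n l : ℕ) : ℕ :=
  (Finset.univ.filter fun g : Fin n → Fin l =>
      ∀ i, 2 ≤ (Finset.univ.filter fun x => g x = i).card).card

def fib {n l : ℕ} (g : Fin n → Fin l) (j : Fin l) : ℕ :=
  (Finset.univ.filter fun x => g x = j).card

lemma Tcard_def (n l : ℕ) :
    Tcard n l = (Finset.univ.filter fun g : Fin n → Fin l => ∀ i, 2 ≤ fib g i).card := rfl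

lemma fib_snoc {m k : ℕ} (g : Fin m → Fin k) (i : Fin k) (j : Fin k) :
    fib (Fin.snoc g i) j = fib g j + if i = j then 1 else 0 := by
  simp only [fib, Finset.card_filter]
  rw [Fin.sum_univ_castSucc]
  simp [Fin.snoc_castSucc, Fin.snoc_last]

lemma fib_insertNth {m k : ℕ} (f : Fin m → Fin k) (x : Fin (m + 1)) (a : Fin k) (j : Fin k) :
    fib (x.insertNth a f) j = (if a = j then 1 else 0) + fib f j := by
  simp only [fib, Finset.card_filter]
  rw [Fin.sum_univ_succAbove _ x]
  simp [Fin.insertNth_apply_same, Fin.insertNth_apply_succAbove]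

lemma fib_succAbove_comp {m k : ℕ} (f : Fin m → Fin k) (i : Fin (k + 1)) (u : Fin k) :
    fib (fun y => i.succAbove (f y)) (i.succAbove u) = fib f u := by
  simp only [fib, Fin.succAbove_right_inj]

lemma fib_succAbove_comp_self {m k : ℕ} (f : Fin m → Fin k) (i : Fin (k + 1)) :
    fib (fun y => i.succAbove (f y)) i = 0 := by
  simp only [fib]
  rw [Finset.card_eq_zero, Finset.filter_eq_empty_iff]
  intro y _
  exact Fin.succAbove_ne i (f y)

lemma Tcard_zero_zero : Tcard 0 0 = 1 := by decide

lemma Tcard_zero_succ (l : ℕ) : Tcard 0 (l + 1) = 0 := by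
  rw [Tcard_def, Finset.card_eq_zero, Finset.filter_eq_empty_iff]
  intro g _
  push_neg
  exact ⟨0, by simp [fib]⟩

lemma Tcard_succ_zero (n : ℕ) : Tcard (n + 1) 0 = 0 := by
  haveI : IsEmpty (Fin (n + 1) → Fin 0) := ⟨fun g => (g 0).elim0⟩
  rw [Tcard_def, Finset.univ_eq_empty, Finset.filter_empty, Finset.card_empty]

lemma Tcard_one_succ (l : ℕ) : Tcard 1 (l + 1) = 0 := by
  rw [Tcard_def, Finset.card_eq_zero, Finset.filter_eq_empty_iff]
  intro g _ h
  have h1 := h (g 0)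
  have h2 : fib g (g 0) ≤ 1 := by
    have := Finset.card_filter_le (Finset.univ : Finset (Fin 1)) (fun x => g x = g 0)
    simpa [fib] using this
  omega

lemma partA (n l : ℕ) :
    ((Finset.univ.filter fun g : Fin (n + 2) → Fin (l + 1) =>
        (∀ i, 2 ≤ fib g i) ∧ 3 ≤ fib g (g (Fin.last (n + 1)))).card)
    = (l + 1) * Tcard (n + 1) (l + 1) := by
  have hcard : (l + 1) * Tcard (n + 1) (l + 1)
      = ((Finset.univ ×ˢ (Finset.univ.filter fun g' : Fin (n + 1) → Fin (l + 1) =>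
          ∀ i, 2 ≤ fib g' i) : Finset (Fin (l + 1) × (Fin (n + 1) → Fin (l + 1))))).card := by
    rw [Finset.card_product, Finset.card_univ, Fintype.card_fin, Tcard_def]
  rw [hcard]
  refine (Finset.card_bij (fun p _ => Fin.snoc p.2 p.1) ?_ ?_ ?_).symm
  · rintro ⟨i, g'⟩ ha
    simp only [Finset.mem_product, Finset.mem_filter, Finset.mem_univ, true_and] at ha ⊢
    constructor
    · intro j
      rw [fib_snoc]
      have := ha j
      split <;> omega
    · rw [Fin.snoc_last, fib_snoc, if_pos rfl]
      have := ha i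
      omega
  · rintro ⟨i, g'⟩ hp ⟨i', g''⟩ hq h
    have h1 : i = i' := by
      have := congrFun h (Fin.last (n + 1))
      simpa [Fin.snoc_last] using this
    have h2 : g' = g'' := funext fun y => by
      have := congrFun h (Fin.castSucc y)
      simpa [Fin.snoc_castSucc] using this
    simp [h1, h2]
  · intro g hg
    simp only [Finset.mem_filter, Finset.mem_univ, true_and] at hg
    have key : ∀ j, fib g j = fib (Fin.init g) j
        + if g (Fin.last (n + 1)) = j then 1 else 0 := fun j => by
      conv_lhs => rw [← Fin.snoc_init_self g]
      exact fib_snoc _ _ _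
    refine ⟨(g (Fin.last (n + 1)), Fin.init g), ?_, Fin.snoc_init_self g⟩
    simp only [Finset.mem_product, Finset.mem_filter, Finset.mem_univ, true_and]
    intro j
    have hk := key j
    by_cases hej : g (Fin.last (n + 1)) = j
    · rw [if_pos hej] at hk
      have h3 := hg.2
      rw [hej] at h3
      omega
    · rw [if_neg hej] at hk
      have := hg.1 j
      omega

lemma partB (n l : ℕ) :
    ((Finset.univ.filter fun g : Fin (n + 2) → Fin (l + 1) =>
        (∀ i, 2 ≤ fib g i) ∧ ¬ 3 ≤ fib g (g (Fin.last (n + 1)))).card)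
    = (l + 1) * ((n + 1) * Tcard n l) := by
  have hcard : (l + 1) * ((n + 1) * Tcard n l)
      = ((Finset.univ ×ˢ ((Finset.univ : Finset (Fin (n + 1))) ×ˢ
          (Finset.univ.filter fun h : Fin n → Fin l => ∀ u, 2 ≤ fib h u)) :
          Finset (Fin (l + 1) × (Fin (n + 1) × (Fin n → Fin l))))).card := by
    rw [Finset.card_product, Finset.card_product, Finset.card_univ, Finset.card_univ,
      Fintype.card_fin, Fintype.card_fin, Tcard_def]
  rw [hcard]
  refine (Finset.card_bij
    (fun p _ => Fin.snoc (p.2.1.insertNth p.1 (fun y => p.1.succAbove (p.2.2 y))) p.1)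
    ?_ ?_ ?_).symm
  · rintro ⟨i, x, h⟩ hp
    simp only [Finset.mem_product, Finset.mem_filter, Finset.mem_univ, true_and] at hp ⊢
    have hfib : ∀ j, fib (Fin.snoc (x.insertNth i (fun y => i.succAbove (h y))) i) j
        = (if i = j then 1 else 0) + fib (fun y => i.succAbove (h y)) j
          + (if i = j then 1 else 0) := by
      intro j
      rw [fib_snoc, fib_insertNth]
    constructor
    · intro j
      rw [hfib]
      by_cases hij : j = i
      · subst hij
        simp
      · obtain ⟨u, hu⟩ := Fin.exists_succAbove_eq hij
        rw [← hu, fib_succAbove_comp]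
        have := hp u
        omega
    · rw [Fin.snoc_last, hfib, if_pos rfl, fib_succAbove_comp_self]
      omega
  · rintro ⟨i, x, h⟩ hp ⟨i', x', h'⟩ hq heq
    simp only at heq
    have h1 : i = i' := by
      have := congrFun heq (Fin.last (n + 1))
      simpa [Fin.snoc_last] using this
    subst h1
    have h20 : x.insertNth (α := fun _ => Fin (l + 1)) i (fun y => i.succAbove (h y))
        = x'.insertNth (α := fun _ => Fin (l + 1)) i (fun y => i.succAbove (h' y)) := by
      have h5 := congrArg Fin.init heq
      rwa [Fin.init_snoc, Fin.init_snoc] at h5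
    have h2 : ∀ w, x.insertNth (α := fun _ => Fin (l + 1)) i (fun y => i.succAbove (h y)) w
        = x'.insertNth (α := fun _ => Fin (l + 1)) i (fun y => i.succAbove (h' y)) w :=
      fun w => congrFun h20 w
    have h3 : x = x' := by
      by_contra hxx
      obtain ⟨u, hu⟩ := Fin.exists_succAbove_eq (Ne.symm hxx)
      have e1 : x.insertNth (α := fun _ => Fin (l + 1)) i (fun y => i.succAbove (h y)) x' = i := by
        rw [h2 x', Fin.insertNth_apply_same]
      rw [← hu, Fin.insertNth_apply_succAbove] at e1
      exact Fin.succAbove_ne i (h u) e1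
    subst h3
    have h4 : h = h' := funext fun y => by
      have := h2 (x.succAbove y)
      rw [Fin.insertNth_apply_succAbove, Fin.insertNth_apply_succAbove] at this
      exact (Fin.succAbove_right_inj (p := i)).mp this
    simp [h4]
  · intro g hg
    simp only [Finset.mem_filter, Finset.mem_univ, true_and] at hg
    obtain ⟨hval, hnot3⟩ := hg
    set i := g (Fin.last (n + 1)) with hi
    have hfi : fib g i = 2 := le_antisymm (by omega) (hval i)
    have hlast : Fin.last (n + 1) ∈ Finset.univ.filter fun z => g z = i := by
      simp [hi]
    have herase : ((Finset.univ.filter fun z => g z = i).erase (Fin.last (n + 1))).card = 1 := by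
      rw [Finset.card_erase_of_mem hlast]
      have : (Finset.univ.filter fun z => g z = i).card = 2 := hfi
      omega
    obtain ⟨y, hy⟩ := Finset.card_eq_one.mp herase
    have hymem : y ≠ Fin.last (n + 1) ∧ g y = i := by
      have : y ∈ (Finset.univ.filter fun z => g z = i).erase (Fin.last (n + 1)) := by
        rw [hy]; exact Finset.mem_singleton_self y
      simp only [Finset.mem_erase, Finset.mem_filter, Finset.mem_univ, true_and] at this
      exact this
    obtain ⟨x, hx⟩ := Fin.exists_castSucc_eq.mpr hymem.1
    have hgx : g (Fin.castSucc x) = i := hx ▸ hymem.2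
    have hmem : ∀ z, g z = i → z = Fin.last (n + 1) ∨ z = Fin.castSucc x := by
      intro z hz
      by_cases hzl : z = Fin.last (n + 1)
      · exact Or.inl hzl
      · right
        have : z ∈ (Finset.univ.filter fun w => g w = i).erase (Fin.last (n + 1)) := by
          simp [hzl, hz]
        rw [hy, Finset.mem_singleton] at this
        rw [this, ← hx]
    have hne : ∀ y' : Fin n, g (Fin.castSucc (x.succAbove y')) ≠ i := by
      intro y' hcon
      rcases hmem _ hcon with hc | hc
      · exact (Fin.castSucc_lt_last _).ne hc
      · exact Fin.succAbove_ne x y' (Fin.castSucc_inj.mp hc)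
    choose h hh using fun y' => Fin.exists_succAbove_eq (hne y')
    have heq : Fin.snoc (x.insertNth i (fun y' => i.succAbove (h y'))) i = g := by
      funext z
      refine Fin.lastCases ?_ (fun w => ?_) z
      · rw [Fin.snoc_last, hi]
      · rw [Fin.snoc_castSucc]
        refine Fin.succAboveCases x ?_ (fun y' => ?_) w
        · rw [Fin.insertNth_apply_same, hgx]
        · rw [Fin.insertNth_apply_succAbove, hh]
    refine ⟨(i, x, h), ?_, heq⟩
    simp only [Finset.mem_product, Finset.mem_filter, Finset.mem_univ, true_and]
    intro u
    have hc : fib (Fin.snoc (x.insertNth i (fun y' => i.succAbove (h y'))) i) (i.succAbove u)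
        = fib h u := by
      rw [fib_snoc, fib_insertNth, fib_succAbove_comp,
        if_neg (Ne.symm (Fin.succAbove_ne i u))]
      omega
    rw [heq] at hc
    rw [← hc]
    exact hval (i.succAbove u)

lemma Tcard_rec (n l : ℕ) :
    Tcard (n + 2) (l + 1)
      = (l + 1) * Tcard (n + 1) (l + 1) + (l + 1) * ((n + 1) * Tcard n l) := by
  classical
  have key := Finset.card_filter_add_card_filter_not
    (s := Finset.univ.filter fun g : Fin (n + 2) → Fin (l + 1) => ∀ i, 2 ≤ fib g i)
    (p := fun g => 3 ≤ fib g (g (Fin.last (n + 1))))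
  rw [Finset.filter_filter, Finset.filter_filter] at key
  have hA := partA n l
  have hB := partB n l
  rw [Tcard_def, ← key]
  rw [show (Finset.univ.filter fun g : Fin (n + 2) → Fin (l + 1) =>
      (∀ i, 2 ≤ fib g i) ∧ 3 ≤ fib g (g (Fin.last (n + 1)))).card
      = (l + 1) * Tcard (n + 1) (l + 1) from hA]
  rw [show (Finset.univ.filter fun g : Fin (n + 2) → Fin (l + 1) =>
      (∀ i, 2 ≤ fib g i) ∧ ¬ 3 ≤ fib g (g (Fin.last (n + 1)))).card
      = (l + 1) * ((n + 1) * Tcard n l) from hB]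

lemma L1 (n l : ℕ) : Tcard n l = l.factorial * A2 n l := by
  induction n using Nat.strong_induction_on generalizing l with
  | _ n ih =>
    match n with
    | 0 =>
      cases l with
      | zero => simp [Tcard_zero_zero, A2]
      | succ l => simp [Tcard_zero_succ, A2]
    | 1 =>
      cases l with
      | zero => simp [Tcard_succ_zero, A2]
      | succ l => simp [Tcard_one_succ, A2]
    | (n + 2) =>
      cases l with
      | zero => simp [Tcard_succ_zero, A2]
      | succ l =>
        rw [Tcard_rec, ih (n + 1) (by omega), ih n (by omega)]
        show _ = (l + 1).factorial * ((l + 1) * A2 (n + 1) (l + 1) + (n + 1) * A2 n l)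
        rw [Nat.factorial_succ]
        ring

lemma st_rec (m k : ℕ) :
    stirling2 (m + 1) (k + 1) = (k + 1) * stirling2 m (k + 1) + stirling2 m k := rfl

lemma st_succ_zero (m : ℕ) : stirling2 (m + 1) 0 = 0 := rfl

lemma choose_st_bd (n l : ℕ) : (n + 1).choose (l + 1) * stirling2 (n + 1 - l) 0 = 0 := by
  by_cases h : l ≤ n
  · have e : n + 1 - l = (n - l) + 1 := by omega
    rw [e, st_succ_zero, mul_zero]
  · rw [Nat.choose_eq_zero_of_lt (by omega), zero_mul]

lemma step2 (n l j : ℕ) (hj : j ≤ l) :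
    ((n + 1).choose j : ℤ) * (stirling2 (n + 2 - j) (l + 1 - j) : ℤ)
    = ((n + 1).choose j : ℤ) * (((l + 1 - j : ℕ) : ℤ) * (stirling2 (n + 1 - j) (l + 1 - j) : ℤ)
        + (stirling2 (n + 1 - j) (l - j) : ℤ)) := by
  rcases le_or_gt j (n + 1) with h | h
  · have h1 : n + 2 - j = (n + 1 - j) + 1 := by omega
    have h2 : l + 1 - j = (l - j) + 1 := by omega
    rw [h1, h2, st_rec]
    push_cast
    ring
  · rw [Nat.choose_eq_zero_of_lt h]
    push_cast
    ring

lemma star (n l : ℕ) :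
    ∑ j ∈ Finset.range (l + 2),
        (-1 : ℤ) ^ j * ((n + 2).choose j : ℤ) * (stirling2 (n + 2 - j) (l + 1 - j) : ℤ)
    = (l + 1) * ∑ j ∈ Finset.range (l + 2),
          (-1 : ℤ) ^ j * ((n + 1).choose j : ℤ) * (stirling2 (n + 1 - j) (l + 1 - j) : ℤ)
      + (n + 1) * ∑ j ∈ Finset.range (l + 1),
          (-1 : ℤ) ^ j * (n.choose j : ℤ) * (stirling2 (n - j) (l - j) : ℤ) := by
  have h1 : (∑ j ∈ Finset.range (l + 2),
        (-1 : ℤ) ^ j * ((n + 2).choose j : ℤ) * (stirling2 (n + 2 - j) (l + 1 - j) : ℤ))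
      - (∑ j ∈ Finset.range (l + 2),
        (-1 : ℤ) ^ j * ((n + 1).choose j : ℤ) * (stirling2 (n + 2 - j) (l + 1 - j) : ℤ))
      = -(∑ j ∈ Finset.range (l + 1),
        (-1 : ℤ) ^ j * ((n + 1).choose j : ℤ) * (stirling2 (n + 1 - j) (l - j) : ℤ)) := by
    rw [← Finset.sum_sub_distrib, Finset.sum_range_succ']
    have hpt : ∀ j ∈ Finset.range (l + 1),
        ((-1 : ℤ) ^ (j + 1) * ((n + 2).choose (j + 1) : ℤ)
            * (stirling2 (n + 2 - (j + 1)) (l + 1 - (j + 1)) : ℤ)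
          - (-1 : ℤ) ^ (j + 1) * ((n + 1).choose (j + 1) : ℤ)
            * (stirling2 (n + 2 - (j + 1)) (l + 1 - (j + 1)) : ℤ))
        = -((-1 : ℤ) ^ j * ((n + 1).choose j : ℤ) * (stirling2 (n + 1 - j) (l - j) : ℤ)) := by
      intro j hj
      have e1 : n + 2 - (j + 1) = n + 1 - j := by omega
      have e2 : l + 1 - (j + 1) = l - j := by omega
      rw [e1, e2, Nat.choose_succ_succ (n + 1) j]
      push_cast
      ring
    rw [Finset.sum_congr rfl hpt, Finset.sum_neg_distrib]
    simp
  have h2 : (∑ j ∈ Finset.range (l + 2),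
        (-1 : ℤ) ^ j * ((n + 1).choose j : ℤ) * (stirling2 (n + 2 - j) (l + 1 - j) : ℤ))
      = ((l : ℤ) + 1) * (∑ j ∈ Finset.range (l + 1),
            (-1 : ℤ) ^ j * ((n + 1).choose j : ℤ) * (stirling2 (n + 1 - j) (l + 1 - j) : ℤ))
        - (∑ j ∈ Finset.range (l + 1),
            (-1 : ℤ) ^ j * (j : ℤ) * ((n + 1).choose j : ℤ) * (stirling2 (n + 1 - j) (l + 1 - j) : ℤ))
        + (∑ j ∈ Finset.range (l + 1),
            (-1 : ℤ) ^ j * ((n + 1).choose j : ℤ) * (stirling2 (n + 1 - j) (l - j) : ℤ))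
        + (-1 : ℤ) ^ (l + 1) * ((n + 1).choose (l + 1) : ℤ) * (stirling2 (n + 1 - l) 0 : ℤ) := by
    rw [Finset.sum_range_succ]
    have e1 : n + 2 - (l + 1) = n + 1 - l := by omega
    have e2 : l + 1 - (l + 1) = 0 := by omega
    rw [e1, e2]
    have hpt : ∀ j ∈ Finset.range (l + 1),
        (-1 : ℤ) ^ j * ((n + 1).choose j : ℤ) * (stirling2 (n + 2 - j) (l + 1 - j) : ℤ)
        = ((l : ℤ) + 1) * ((-1 : ℤ) ^ j * ((n + 1).choose j : ℤ)
              * (stirling2 (n + 1 - j) (l + 1 - j) : ℤ))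
          - (-1 : ℤ) ^ j * (j : ℤ) * ((n + 1).choose j : ℤ)
              * (stirling2 (n + 1 - j) (l + 1 - j) : ℤ)
          + (-1 : ℤ) ^ j * ((n + 1).choose j : ℤ) * (stirling2 (n + 1 - j) (l - j) : ℤ) := by
      intro j hj
      simp only [Finset.mem_range] at hj
      have hjl : j ≤ l := by omega
      have hcast : ((l + 1 - j : ℕ) : ℤ) = (l : ℤ) + 1 - (j : ℤ) := by omega
      have hstep := step2 n l j hjl
      rw [hcast] at hstep
      linear_combination ((-1 : ℤ) ^ j) * hstep
    rw [Finset.sum_congr rfl hpt]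
    rw [Finset.sum_add_distrib, Finset.sum_sub_distrib, ← Finset.mul_sum]
  have h3 : (∑ j ∈ Finset.range (l + 1),
        (-1 : ℤ) ^ j * (j : ℤ) * ((n + 1).choose j : ℤ) * (stirling2 (n + 1 - j) (l + 1 - j) : ℤ))
      = -(((n : ℤ) + 1) * ∑ j ∈ Finset.range l,
          (-1 : ℤ) ^ j * (n.choose j : ℤ) * (stirling2 (n - j) (l - j) : ℤ)) := by
    rw [Finset.sum_range_succ']
    have hpt : ∀ j ∈ Finset.range l,
        (-1 : ℤ) ^ (j + 1) * ((j : ℤ) + 1) * ((n + 1).choose (j + 1) : ℤ)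
            * (stirling2 (n + 1 - (j + 1)) (l + 1 - (j + 1)) : ℤ)
        = -(((n : ℤ) + 1) * ((-1 : ℤ) ^ j * (n.choose j : ℤ) * (stirling2 (n - j) (l - j) : ℤ))) := by
      intro j hj
      have e1 : n + 1 - (j + 1) = n - j := by omega
      have e2 : l + 1 - (j + 1) = l - j := by omega
      have hm : ((n : ℤ) + 1) * (n.choose j : ℤ) = ((n + 1).choose (j + 1) : ℤ) * ((j : ℤ) + 1) := by
        exact_mod_cast congrArg (Nat.cast : ℕ → ℤ) (Nat.add_one_mul_choose_eq n j)
      rw [e1, e2]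
      linear_combination ((-1 : ℤ) ^ j * (stirling2 (n - j) (l - j) : ℤ)) * hm
    calc ∑ j ∈ Finset.range l, (-1 : ℤ) ^ (j + 1) * ((j : ℤ) + 1) * ((n + 1).choose (j + 1) : ℤ)
            * (stirling2 (n + 1 - (j + 1)) (l + 1 - (j + 1)) : ℤ)
          + (-1 : ℤ) ^ 0 * ((0 : ℕ) : ℤ) * ((n + 1).choose 0 : ℤ)
            * (stirling2 (n + 1 - 0) (l + 1 - 0) : ℤ)
        = ∑ j ∈ Finset.range l,
            -(((n : ℤ) + 1) * ((-1 : ℤ) ^ j * (n.choose j : ℤ) * (stirling2 (n - j) (l - j) : ℤ)))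
          + 0 := by
          rw [Finset.sum_congr rfl hpt]
          norm_num
      _ = -(((n : ℤ) + 1) * ∑ j ∈ Finset.range l,
            (-1 : ℤ) ^ j * (n.choose j : ℤ) * (stirling2 (n - j) (l - j) : ℤ)) := by
          rw [Finset.sum_neg_distrib, ← Finset.mul_sum]
          ring
  have h4 : (∑ j ∈ Finset.range (l + 2),
        (-1 : ℤ) ^ j * ((n + 1).choose j : ℤ) * (stirling2 (n + 1 - j) (l + 1 - j) : ℤ))
      = (∑ j ∈ Finset.range (l + 1),
          (-1 : ℤ) ^ j * ((n + 1).choose j : ℤ) * (stirling2 (n + 1 - j) (l + 1 - j) : ℤ))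
        + (-1 : ℤ) ^ (l + 1) * ((n + 1).choose (l + 1) : ℤ) * (stirling2 (n - l) 0 : ℤ) := by
    rw [Finset.sum_range_succ]
    have e1 : n + 1 - (l + 1) = n - l := by omega
    have e2 : l + 1 - (l + 1) = 0 := by omega
    rw [e1, e2]
  have h5 : (∑ j ∈ Finset.range (l + 1),
        (-1 : ℤ) ^ j * (n.choose j : ℤ) * (stirling2 (n - j) (l - j) : ℤ))
      = (∑ j ∈ Finset.range l,
          (-1 : ℤ) ^ j * (n.choose j : ℤ) * (stirling2 (n - j) (l - j) : ℤ))
        + (-1 : ℤ) ^ l * (n.choose l : ℤ) * (stirling2 (n - l) 0 : ℤ) := by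
    rw [Finset.sum_range_succ, Nat.sub_self]
  have h6 : (-1 : ℤ) ^ (l + 1) * ((n + 1).choose (l + 1) : ℤ) * (stirling2 (n + 1 - l) 0 : ℤ)
      = 0 := by
    have := choose_st_bd n l
    have hz : ((n + 1).choose (l + 1) : ℤ) * (stirling2 (n + 1 - l) 0 : ℤ) = 0 := by
      exact_mod_cast congrArg (Nat.cast : ℕ → ℤ) this
    rw [mul_assoc, hz, mul_zero]
  have h7 : ((l : ℤ) + 1) * ((-1 : ℤ) ^ (l + 1) * ((n + 1).choose (l + 1) : ℤ)
        * (stirling2 (n - l) 0 : ℤ))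
      + ((n : ℤ) + 1) * ((-1 : ℤ) ^ l * (n.choose l : ℤ) * (stirling2 (n - l) 0 : ℤ)) = 0 := by
    have hm : ((n : ℤ) + 1) * (n.choose l : ℤ) = ((n + 1).choose (l + 1) : ℤ) * ((l : ℤ) + 1) := by
      exact_mod_cast congrArg (Nat.cast : ℕ → ℤ) (Nat.add_one_mul_choose_eq n l)
    linear_combination ((-1 : ℤ) ^ l * (stirling2 (n - l) 0 : ℤ)) * hm
  linear_combination h1 + h2 - h3 - ((l : ℤ) + 1) * h4 - ((n : ℤ) + 1) * h5 + h6 - h7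

lemma L2 (n l : ℕ) : (A2 n l : ℤ)
    = ∑ j ∈ Finset.range (l + 1),
        (-1 : ℤ) ^ j * (n.choose j : ℤ) * (stirling2 (n - j) (l - j) : ℤ) := by
  induction n using Nat.strong_induction_on generalizing l with
  | _ n ih =>
    match n with
    | 0 =>
      cases l with
      | zero => simp [A2, stirling2]
      | succ l =>
        rw [show A2 0 (l + 1) = 0 from rfl]
        symm
        push_cast
        apply Finset.sum_eq_zero
        intro j hj
        match j with
        | 0 => simp [stirling2]
        | j + 1 => simp [Nat.choose]
    | 1 =>
      cases l with
      | zero => norm_num [A2, Finset.sum_range_one, stirling2]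
      | succ l =>
        rw [show A2 1 (l + 1) = 0 from rfl]
        symm
        cases l with
        | zero => norm_num [Finset.sum_range_succ, stirling2]
        | succ m =>
          apply Finset.sum_eq_zero
          intro j hj
          match j with
          | 0 => simp [stirling2]
          | 1 => simp [stirling2]
          | j + 2 => simp [Nat.choose_eq_zero_of_lt (show 1 < j + 2 by omega)]
    | n + 2 =>
      cases l with
      | zero =>
        rw [show A2 (n + 2) 0 = 0 from rfl]
        simp [st_succ_zero]
      | succ l =>
        have hrec : (A2 (n + 2) (l + 1) : ℤ)
            = (l + 1) * (A2 (n + 1) (l + 1) : ℤ) + (n + 1) * (A2 n l : ℤ) := by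
          rw [show A2 (n + 2) (l + 1) = (l + 1) * A2 (n + 1) (l + 1) + (n + 1) * A2 n l from rfl]
          push_cast
          ring
        rw [hrec, ih (n + 1) (by omega) (l + 1), ih n (by omega) l]
        exact (star n l).symm

/-- `T(r,l)`, the number of functions from an `(r-1)`-set onto `l` blocks with every
block having at least two preimages, equals
`l! Σ_{j=0}^{l} (-1)^j C(r-1,j) S(r-1-j, l-j)`. -/
theorem stmt11 (r l : ℕ) (hr : 1 ≤ r) :
    ((Finset.univ.filter fun g : Fin (r - 1) → Fin l =>
        ∀ i, 2 ≤ (Finset.univ.filter fun x => g x = i).card).card : ℤ)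
    = (l.factorial : ℤ) *
        ∑ j ∈ Finset.range (l + 1),
          (-1 : ℤ) ^ j * ((r - 1).choose j : ℤ) * (stirling2 (r - 1 - j) (l - j) : ℤ) := by
  obtain ⟨n, rfl⟩ : ∃ n, r = n + 1 := ⟨r - 1, by omega⟩
  show (Tcard n l : ℤ) = (l.factorial : ℤ) *
      ∑ j ∈ Finset.range (l + 1),
        (-1 : ℤ) ^ j * (n.choose j : ℤ) * (stirling2 (n - j) (l - j) : ℤ)
  rw [L1 n l]
  push_cast
  rw [L2 n l]
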